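/- Let n≥1. For every m≥n+2 the set (Γ_{n+1}∩D_m)∖(D_{n+1}Γ_{n+2} ∪ ⋯ ∪ D_{m-1}Γ_m) is nonempty, and moreover |(Γ_{n+1}∩D_m)∖(D_{n+1}Γ_{n+2} ∪ ⋯ ∪ D_{m-1}Γ_m)| ≥ (|D_m|/|D_{n+1}|)·∏_{l=1}^{m-n-1}(1−|D_{n+l}|/|D_{n+l+1}|). Furthermore, if γ belongs to this set then γD_{n+1} ⊆ D_m∖(D_{n+1}Γ_{n+2} ∪ ⋯ ∪ D_{m-1}Γ_m). -/

import Mathlib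

open Pointwise MeasureTheory Filter Topology

/-- The (left) shift action of `G` on `G → A`: `(σ^g x)(h) = x(g⁻¹ h)`. -/
def shift {G A : Type*} [Group G] (g : G) (x : G → A) : G → A := fun h => x (g⁻¹ * h)

/-- `Per(x, Γ, α) = {g ∈ G : x(γ g) = α for all γ ∈ Γ}`. -/
def Per {G A : Type*} [Group G] (x : G → A) (Γ : Subgroup G) (α : A) : Set G :=
  {g : G | ∀ γ ∈ Γ, x (γ * g) = α}

/-- `Per(x, Γ) = ⋃_α Per(x, Γ, α)`. -/
def PerAll {G A : Type*} [Group G] (x : G → A) (Γ : Subgroup G) : Set G :=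
  ⋃ α : A, Per x Γ α

/-- `x` is a Toeplitz array if every `g ∈ G` is periodic for some finite index subgroup. -/
def IsToeplitz {G A : Type*} [Group G] (x : G → A) : Prop :=
  ∀ g : G, ∃ Γ : Subgroup G, Γ.FiniteIndex ∧ g ∈ PerAll x Γ

/-- `D` is a fundamental domain of `G / Γ`: every `g ∈ G` can be written uniquely as
`g = γ u` with `γ ∈ Γ` and `u ∈ D`. -/
def IsFundDomain {G : Type*} [Group G] (Γ : Subgroup G) (D : Finset G) : Prop :=
  ∀ g : G, ∃! p : G × G, p.1 ∈ Γ ∧ p.2 ∈ D ∧ g = p.1 * p.2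

/-- The symbol `α_{m+1} ∈ Σ = {1, …, r}` of the construction: the symbol `j ∈ {1, …, r}` with
`j ≡ m+1 (mod r)`, rendered in `Fin r` (the symbol `i ∈ {1, …, r}` corresponds to `i-1`). -/
def sym {r : ℕ} (hr : 1 < r) (m : ℕ) : Fin r := ⟨m % r, Nat.mod_lt m (by omega)⟩

section Aux13
variable {G : Type*} [Group G]

lemma fund_uniq13 {Γ : Subgroup G} {Dn : Finset G} (h : IsFundDomain Γ Dn)
    {γ₁ u₁ γ₂ u₂ : G} (h1 : γ₁ ∈ Γ) (h2 : u₁ ∈ Dn) (h3 : γ₂ ∈ Γ) (h4 : u₂ ∈ Dn)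
    (he : γ₁ * u₁ = γ₂ * u₂) : γ₁ = γ₂ ∧ u₁ = u₂ := by
  obtain ⟨p, -, hu⟩ := h (γ₁ * u₁)
  have e1 := hu (γ₁, u₁) ⟨h1, h2, rfl⟩
  have e2 := hu (γ₂, u₂) ⟨h3, h4, he⟩
  have := e1.trans e2.symm
  exact ⟨congrArg Prod.fst this, congrArg Prod.snd this⟩

lemma mem_mul_normal13 {N : Subgroup G} (hN : N.Normal) (A : Set G) (x : G) :
    x ∈ A * (N : Set G) ↔ ∃ δ ∈ N, ∃ v ∈ A, x = δ * v := by
  constructor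
  · rintro ⟨a, ha, ν, hν, rfl⟩
    exact ⟨a * ν * a⁻¹, hN.conj_mem ν hν a, a, ha, by group⟩
  · rintro ⟨δ, hδ, v, hv, rfl⟩
    exact ⟨v, hv, v⁻¹ * δ * v, by simpa using hN.conj_mem δ hδ v⁻¹, by group⟩

lemma ncard_prod13 {α β : Type*} (s : Set α) (t : Set β) :
    (s ×ˢ t).ncard = s.ncard * t.ncard := by
  rw [← Nat.card_coe_set_eq, ← Nat.card_coe_set_eq, ← Nat.card_coe_set_eq,
    Nat.card_congr (Equiv.Set.prod s t), Nat.card_prod]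

end Aux13

set_option maxHeartbeats 1000000 in
theorem statement13 {G : Type*} [Group G] [Countable G]
    -- the sequence of subgroups (with the convention `Γ 0 = G`)
    (Γ : ℕ → Subgroup G) (hΓ0 : Γ 0 = ⊤) (hanti : StrictAnti Γ)
    (hnormal : ∀ n, (Γ n).Normal) (hfi : ∀ n, (Γ n).FiniteIndex)
    (hint : (⨅ n, Γ n) = ⊥) (hidx : ∀ n, 3 ≤ (Γ (n + 1)).relIndex (Γ n))
    -- the fundamental domains
    (D : ℕ → Finset G) (hD0 : D 0 = {1}) (hfund : ∀ n, IsFundDomain (Γ n) (D n))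
    (hone : ∀ n, (1 : G) ∈ D n) (hDmono : ∀ n, D n ⊆ D (n + 1))
    (hcoverD : ∀ g : G, ∃ n, g ∈ D n)
    (hdecomp : ∀ i j, i < j →
      (D j : Set G) = ⋃ v ∈ (D j : Set G) ∩ (Γ i : Set G), v • (D i : Set G)) :
    ∀ n, 1 ≤ n → ∀ m, n + 2 ≤ m →
      ∀ S : Set G,
        S = ((Γ (n + 1) : Set G) ∩ (D m : Set G)) \
              ⋃ s ∈ Finset.Icc (n + 1) (m - 1), (D s : Set G) * ((Γ (s + 1) : Subgroup G) : Set G) →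
        -- the set is nonempty
        S.Nonempty ∧
        -- the cardinality lower bound
        ((D m).card : ℝ) / (D (n + 1)).card *
            ∏ l ∈ Finset.Icc 1 (m - n - 1), (1 - ((D (n + l)).card : ℝ) / (D (n + l + 1)).card)
          ≤ S.ncard ∧
        -- the translate property
        ∀ γ ∈ S, γ • (D (n + 1) : Set G) ⊆
          (D m : Set G) \
            ⋃ s ∈ Finset.Icc (n + 1) (m - 1), (D s : Set G) * ((Γ (s + 1) : Subgroup G) : Set G) := by
  classical
  intro n hn m hm S hS
  have hmono : ∀ {i j : ℕ}, i ≤ j → Γ j ≤ Γ i := fun h => hanti.antitone h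
  have hpos : ∀ s, 0 < (D s).card := fun s => Finset.card_pos.2 ⟨1, hone s⟩
  have hGD : ∀ s x, x ∈ D s → x ∈ Γ s → x = (1 : G) := by
    intro s x hx hγ
    exact (fund_uniq13 (hfund s) hγ (hone s) (Subgroup.one_mem _) hx (by group)).1
  have hdec' : ∀ i j, i < j → ∀ x ∈ D j,
      ∃ v, (v ∈ D j ∧ v ∈ Γ i) ∧ ∃ u ∈ D i, x = v * u := by
    intro i j hij x hx
    have hx' : (x : G) ∈ (D j : Set G) := hx
    rw [hdecomp i j hij] at hx'
    simp only [Set.mem_iUnion, Set.mem_inter_iff, Finset.mem_coe, SetLike.mem_coe,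
      Set.mem_smul_set, smul_eq_mul] at hx'
    obtain ⟨v, ⟨h1, h2⟩, u, hu, he⟩ := hx'
    exact ⟨v, ⟨h1, h2⟩, u, hu, he.symm⟩
  have hsub : ∀ i j, i < j → ∀ v, v ∈ D j → v ∈ Γ i → ∀ u ∈ D i, v * u ∈ D j := by
    intro i j hij v hvD hvΓ u hu
    have : (v * u : G) ∈ (D j : Set G) := by
      rw [hdecomp i j hij]
      simp only [Set.mem_iUnion, Set.mem_inter_iff, Finset.mem_coe, SetLike.mem_coe,
        Set.mem_smul_set, smul_eq_mul]
      exact ⟨v, ⟨hvD, hvΓ⟩, u, hu, rfl⟩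
    exact this
  -- the counting function
  set k : ℕ → ℕ := fun s => ((D (s + 1)).filter (fun g => g ∈ Γ s)).card with hk
  set W : ℕ → Finset G := fun s => ((D (s + 1)).filter (fun g => g ∈ Γ s)).erase 1 with hW
  have hWcard : ∀ s, (W s).card = k s - 1 := by
    intro s
    exact Finset.card_erase_of_mem (Finset.mem_filter.2 ⟨hone (s + 1), Subgroup.one_mem _⟩)
  have hWmem : ∀ s x, x ∈ W s → x ∈ D (s + 1) ∧ x ∈ Γ s ∧ x ∉ Γ (s + 1) := by
    intro s x hx
    rw [hW, Finset.mem_erase, Finset.mem_filter] at hx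
    refine ⟨hx.2.1, hx.2.2, fun hc => hx.1 (hGD (s + 1) x hx.2.1 hc)⟩
  have hWne : ∀ s, (W s).Nonempty := by
    intro s
    obtain ⟨γ, hγs, hγs1⟩ := SetLike.exists_of_lt (hanti (Nat.lt_succ_self s))
    obtain ⟨⟨δ, u⟩, ⟨hδ, hu, hγ⟩, -⟩ := hfund (s + 1) γ
    refine ⟨u, Finset.mem_erase.2 ⟨?_, Finset.mem_filter.2 ⟨hu, ?_⟩⟩⟩
    · intro h1
      exact hγs1 (by rw [hγ, h1, mul_one]; exact hδ)
    · have : u = δ⁻¹ * γ := by rw [hγ]; group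
      rw [this]
      exact mul_mem (inv_mem (hmono (Nat.le_succ s) hδ)) hγs
  have hk2 : ∀ s, 2 ≤ k s := by
    intro s
    have h1 := Finset.card_pos.2 (hWne s)
    rw [hWcard s] at h1
    omega
  have hcard : ∀ s, (D (s + 1)).card = k s * (D s).card := by
    intro s
    have hrw : D (s + 1) = ((D (s + 1)).filter (fun g => g ∈ Γ s)).biUnion
        (fun v => (D s).image (fun u => v * u)) := by
      ext x
      simp only [Finset.mem_biUnion, Finset.mem_filter, Finset.mem_image]
      constructor
      · intro hx
        obtain ⟨v, ⟨h1, h2⟩, u, hu, he⟩ := hdec' s (s + 1) (Nat.lt_succ_self s) x hx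
        exact ⟨v, ⟨h1, h2⟩, u, hu, he.symm⟩
      · rintro ⟨v, ⟨h1, h2⟩, u, hu, rfl⟩
        exact hsub s (s + 1) (Nat.lt_succ_self s) v h1 h2 u hu
    have hdisj : ∀ a ∈ (D (s + 1)).filter (fun g => g ∈ Γ s),
        ∀ b ∈ (D (s + 1)).filter (fun g => g ∈ Γ s), a ≠ b →
        Disjoint ((D s).image (fun u => a * u)) ((D s).image (fun u => b * u)) := by
      intro a ha b hb hab
      rw [Finset.disjoint_left]
      rintro x hx1 hx2
      simp only [Finset.mem_image] at hx1 hx2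
      obtain ⟨u, hu, rfl⟩ := hx1
      obtain ⟨u', hu', he⟩ := hx2
      exact hab (fund_uniq13 (hfund s) (Finset.mem_filter.1 ha).2 hu
        (Finset.mem_filter.1 hb).2 hu' he.symm).1
    rw [hrw, Finset.card_biUnion hdisj]
    have : ∀ v ∈ (D (s + 1)).filter (fun g => g ∈ Γ s),
        ((D s).image (fun u => v * u)).card = (D s).card := by
      intro v _
      exact Finset.card_image_of_injective _ (mul_right_injective v)
    rw [Finset.sum_congr rfl this, Finset.sum_const, smul_eq_mul]
  -- the sets
  set Sset : ℕ → Set G := fun m' => ((Γ (n + 1) : Set G) ∩ (D m' : Set G)) \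
      ⋃ s ∈ Finset.Icc (n + 1) (m' - 1),
        (D s : Set G) * ((Γ (s + 1) : Subgroup G) : Set G) with hSset
  have hBadmem : ∀ m' x, (x ∈ ⋃ s ∈ Finset.Icc (n + 1) (m' - 1),
      (D s : Set G) * ((Γ (s + 1) : Subgroup G) : Set G)) ↔
      ∃ s, (n + 1 ≤ s ∧ s ≤ m' - 1) ∧ ∃ δ ∈ Γ (s + 1), ∃ v ∈ D s, x = δ * v := by
    intro m' x
    simp only [Set.mem_iUnion, Finset.mem_Icc, exists_prop]
    constructor
    · rintro ⟨s, hs, hx⟩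
      obtain ⟨δ, hδ, v, hv, he⟩ := (mem_mul_normal13 (hnormal (s + 1)) _ x).1 hx
      exact ⟨s, hs, δ, hδ, v, hv, he⟩
    · rintro ⟨s, hs, δ, hδ, v, hv, he⟩
      exact ⟨s, hs, (mem_mul_normal13 (hnormal (s + 1)) _ x).2 ⟨δ, hδ, v, hv, he⟩⟩
  have hSm : S = Sset m := hS
  have hSmem : ∀ m' x, x ∈ Sset m' ↔ (x ∈ Γ (n + 1) ∧ x ∈ D m') ∧
      ¬ ∃ s, (n + 1 ≤ s ∧ s ≤ m' - 1) ∧ ∃ δ ∈ Γ (s + 1), ∃ v ∈ D s, x = δ * v := by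
    intro m' x
    rw [hSset]
    simp only [Set.mem_diff, Set.mem_inter_iff, SetLike.mem_coe, Finset.mem_coe]
    rw [hBadmem]
  -- the structural step
  have hstep : ∀ m', n + 1 ≤ m' →
      Sset (m' + 1) = (fun p : G × G => p.1 * p.2) '' ((W m' : Set G) ×ˢ Sset m') := by
    intro m' hm'
    ext γ
    simp only [Set.mem_image, Set.mem_prod, Finset.mem_coe, Prod.exists]
    constructor
    · intro hγ
      obtain ⟨⟨hγΓ, hγD⟩, hγBad⟩ := (hSmem (m' + 1) γ).1 hγ
      obtain ⟨w, ⟨hwD, hwΓ⟩, u, huD, hwu⟩ := hdec' m' (m' + 1) (Nat.lt_succ_self m') γ hγD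
      have hwn : w ∉ Γ (m' + 1) := by
        intro hc
        exact hγBad ⟨m', ⟨hm', by omega⟩, w, hc, u, huD, hwu⟩
      have hw1 : w ≠ 1 := fun h => hwn (h ▸ Subgroup.one_mem _)
      have hwW : w ∈ W m' := Finset.mem_erase.2 ⟨hw1, Finset.mem_filter.2 ⟨hwD, hwΓ⟩⟩
      have huΓ : u ∈ Γ (n + 1) := by
        have : u = w⁻¹ * γ := by rw [hwu]; group
        rw [this]
        exact mul_mem (inv_mem (hmono hm' hwΓ)) hγΓ
      have huS : u ∈ Sset m' := by
        rw [hSmem]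
        refine ⟨⟨huΓ, huD⟩, ?_⟩
        rintro ⟨s, ⟨hs1, hs2⟩, δ, hδ, v, hv, he⟩
        have hsm : s + 1 ≤ m' := by omega
        refine hγBad ⟨s, ⟨hs1, by omega⟩, w * δ, mul_mem (hmono hsm hwΓ) hδ, v, hv, ?_⟩
        rw [hwu, he, mul_assoc]
      exact ⟨w, u, ⟨hwW, huS⟩, hwu.symm⟩
    · rintro ⟨w, u, ⟨hwW, huS⟩, rfl⟩
      obtain ⟨hwD, hwΓ, hwn⟩ := hWmem m' w hwW
      obtain ⟨⟨huΓ, huD⟩, huBad⟩ := (hSmem m' u).1 huS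
      rw [hSmem]
      refine ⟨⟨mul_mem (hmono hm' hwΓ) huΓ,
        hsub m' (m' + 1) (Nat.lt_succ_self m') w hwD hwΓ u huD⟩, ?_⟩
      rintro ⟨s, ⟨hs1, hs2⟩, δ, hδ, v, hv, he⟩
      have hs2' : s ≤ m' := by omega
      by_cases hsm : s = m'
      · subst hsm
        have hδ' : δ ∈ Γ s := hmono (Nat.le_succ s) hδ
        have := fund_uniq13 (hfund s) hwΓ huD hδ' hv he
        exact hwn (this.1 ▸ hδ)
      · have hs3 : s + 1 ≤ m' := by omega
        refine huBad ⟨s, ⟨hs1, by omega⟩, w⁻¹ * δ, mul_mem (inv_mem (hmono hs3 hwΓ)) hδ,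
          v, hv, ?_⟩
        rw [mul_assoc, ← he]
        group
  have hinj : ∀ m', Set.InjOn (fun p : G × G => p.1 * p.2) ((W m' : Set G) ×ˢ Sset m') := by
    rintro m' ⟨a, b⟩ ⟨ha, hb⟩ ⟨c, d⟩ ⟨hc, hd⟩ h
    simp only at h
    have haΓ := (hWmem m' a ha).2.1
    have hcΓ := (hWmem m' c hc).2.1
    have hbD : b ∈ D m' := ((hSmem m' b).1 hb).1.2
    have hdD : d ∈ D m' := ((hSmem m' d).1 hd).1.2
    have := fund_uniq13 (hfund m') haΓ hbD hcΓ hdD h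
    exact Prod.ext this.1 this.2
  have hSfin : ∀ m', (Sset m').Finite := by
    intro m'
    apply (D m').finite_toSet.subset
    intro x hx
    exact ((hSmem m' x).1 hx).1.2
  -- main induction
  have key : ∀ m', n + 1 ≤ m' → (Sset m').Nonempty ∧
      (∏ s ∈ Finset.Icc (n + 1) (m' - 1), ((k s : ℝ) - 1)) ≤ (Sset m').ncard := by
    intro m' hm'
    induction m', hm' using Nat.le_induction with
    | base =>
      have h1 : Sset (n + 1) = {1} := by
        ext x
        rw [hSmem]
        simp only [Set.mem_singleton_iff]
        constructor
        · rintro ⟨⟨h1, h2⟩, -⟩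
          exact hGD (n + 1) x h2 h1
        · rintro rfl
          refine ⟨⟨Subgroup.one_mem _, hone _⟩, ?_⟩
          rintro ⟨s, ⟨hs1, hs2⟩, -⟩
          omega
      rw [h1, Finset.Icc_eq_empty (by omega : ¬ n + 1 ≤ n + 1 - 1), Finset.prod_empty,
        Set.ncard_singleton]
      exact ⟨⟨1, rfl⟩, by norm_num⟩
    | succ m' hm' ih =>
      obtain ⟨hne, hle⟩ := ih
      have hcardeq : (Sset (m' + 1)).ncard = (k m' - 1) * (Sset m').ncard := by
        rw [hstep m' hm', Set.ncard_image_of_injOn (hinj m'), ncard_prod13,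
          Set.ncard_coe_finset, hWcard]
      constructor
      · obtain ⟨w, hw⟩ := hWne m'
        obtain ⟨u, hu⟩ := hne
        rw [hstep m' hm']
        exact ⟨w * u, (w, u), ⟨hw, hu⟩, rfl⟩
      · have e1 : m' + 1 - 1 = m' - 1 + 1 := by omega
        rw [e1, Finset.prod_Icc_succ_top (by omega), show m' - 1 + 1 = m' by omega]
        have h2 : ((Sset (m' + 1)).ncard : ℝ) = ((k m' : ℝ) - 1) * (Sset m').ncard := by
          rw [hcardeq]
          have := hk2 m'
          push_cast [Nat.cast_sub (by omega : 1 ≤ k m')]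
          ring
        rw [h2]
        have hnn : (0 : ℝ) ≤ (k m' : ℝ) - 1 := by
          have := hk2 m'
          have : (2 : ℝ) ≤ (k m' : ℝ) := by exact_mod_cast this
          linarith
        calc (∏ s ∈ Finset.Icc (n + 1) (m' - 1), ((k s : ℝ) - 1)) * ((k m' : ℝ) - 1)
            ≤ ((Sset m').ncard : ℝ) * ((k m' : ℝ) - 1) :=
              mul_le_mul_of_nonneg_right hle hnn
          _ = ((k m' : ℝ) - 1) * (Sset m').ncard := by ring
      -- end succ
  -- the product identity
  have hprodeq : ∀ m', n + 1 ≤ m' →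
      ((D m').card : ℝ) / (D (n + 1)).card *
        ∏ l ∈ Finset.Icc 1 (m' - n - 1), (1 - ((D (n + l)).card : ℝ) / (D (n + l + 1)).card)
      = ∏ s ∈ Finset.Icc (n + 1) (m' - 1), ((k s : ℝ) - 1) := by
    intro m' hm'
    induction m', hm' using Nat.le_induction with
    | base =>
      rw [show n + 1 - n - 1 = 0 by omega, Finset.Icc_eq_empty (by omega : ¬ (1:ℕ) ≤ 0),
        Finset.Icc_eq_empty (by omega : ¬ n + 1 ≤ n + 1 - 1), Finset.prod_empty,
        Finset.prod_empty, mul_one]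
      exact div_self (by exact_mod_cast (hpos (n + 1)).ne')
    | succ m' hm' ih =>
      have e1 : m' + 1 - n - 1 = (m' - n - 1) + 1 := by omega
      rw [e1, Finset.prod_Icc_succ_top (by omega), show n + (m' - n - 1 + 1) = m' by omega]
      rw [show m' + 1 - 1 = (m' - 1) + 1 by omega, Finset.prod_Icc_succ_top (by omega),
        show m' - 1 + 1 = m' by omega]
      rw [← ih]
      have hc : ((D (m' + 1)).card : ℝ) = (k m' : ℝ) * (D m').card := by
        exact_mod_cast congrArg (Nat.cast : ℕ → ℝ) (hcard m')
      rw [hc]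
      have h1 : ((D m').card : ℝ) ≠ 0 := by exact_mod_cast (hpos m').ne'
      have h2 : ((D (n + 1)).card : ℝ) ≠ 0 := by exact_mod_cast (hpos (n + 1)).ne'
      have h3 : (k m' : ℝ) ≠ 0 := by
        have := hk2 m'
        have : (2 : ℝ) ≤ (k m' : ℝ) := by exact_mod_cast this
        linarith
      have halg : ∀ a b c P : ℝ, a ≠ 0 → b ≠ 0 → c ≠ 0 →
          c * a / b * (P * (1 - a / (c * a))) = a / b * P * (c - 1) := by
        intro a b c P ha hb hc
        field_simp
      exact halg _ _ _ _ h1 h2 h3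
  -- assemble
  obtain ⟨hne, hle⟩ := key m (by omega)
  refine ⟨hSm ▸ hne, ?_, ?_⟩
  · rw [hSm, hprodeq m (by omega)]
    exact hle
  · -- translate property
    intro γ hγ x hx
    rw [Set.mem_smul_set] at hx
    obtain ⟨u, hu, rfl⟩ := hx
    rw [smul_eq_mul]
    rw [hSm] at hγ
    obtain ⟨⟨hγΓ, hγD⟩, hγBad⟩ := (hSmem m γ).1 hγ
    constructor
    · exact hsub (n + 1) m (by omega) γ hγD hγΓ u hu
    · intro hb
      obtain ⟨s, ⟨hs1, hs2⟩, δ, hδ, v, hv, heq⟩ := (hBadmem m _).1 hb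
      obtain ⟨⟨δ', c⟩, ⟨hδ', hc, hγeq⟩, -⟩ := hfund (s + 1) γ
      simp only at hδ' hc hγeq
      have hcΓ : c ∈ Γ (n + 1) := by
        have hce : c = δ'⁻¹ * γ := by rw [hγeq]; group
        rw [hce]
        exact mul_mem (inv_mem (hmono (by omega) hδ')) hγΓ
      have hcu : c * u ∈ D (s + 1) := hsub (n + 1) (s + 1) (by omega) c hc hcΓ u hu
      have hvD : v ∈ D (s + 1) := hDmono s hv
      have hkey := fund_uniq13 (hfund (s + 1)) hδ' hcu hδ hvD
        (by rw [← mul_assoc, ← hγeq, heq])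
      have hcuDs : c * u ∈ D s := hkey.2 ▸ hv
      have hcDs : c ∈ D s := by
        by_cases hsn : s = n + 1
        · subst hsn
          have h1 := fund_uniq13 (hfund (n + 1)) hcΓ hu (Subgroup.one_mem _) hcuDs
            (by group)
          rw [h1.1]
          exact hone _
        · obtain ⟨v', ⟨hv'D, hv'Γ⟩, u', hu', heq'⟩ :=
            hdec' (n + 1) s (by omega) (c * u) hcuDs
          have := fund_uniq13 (hfund (n + 1)) hcΓ hu hv'Γ hu' heq'
          exact this.1 ▸ hv'D
      exact hγBad ⟨s, ⟨hs1, hs2⟩, δ', hδ', c, hcDs, hγeq⟩
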